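/- Two subsets I, J of [m] are non-crossing if and only if the associated lattice paths p(I) and p(J) are non-kissing: at every proper common part (a maximal shared connected subpath containing neither the common source nor an endpoint), the two paths leave in the same relative direction as they entered (i.e., every proper common part is a crossing, not a kiss). -/

import Mathlib

open Finset

/-- Pairs `{u<v}` and `{x<y}` (values in `ℕ ∪ {∞}`) are non-nesting if
neither `x<u<v<y` nor `u<x<y<v`. -/
def PairNonNesting (u v x y : WithTop ℕ) : Prop :=
  ¬ (x < u ∧ u < v ∧ v < y) ∧ ¬ (u < x ∧ x < y ∧ y < v)

/-- Pairs `{u<v}` and `{x<y}` are non-crossing if neither `x<u<y<v` nor `u<x<v<y`. -/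
def PairNonCrossing (u v x y : WithTop ℕ) : Prop :=
  ¬ (x < u ∧ u < y ∧ y < v) ∧ ¬ (u < x ∧ x < v ∧ v < y)

/-- Remove one common entry (equal entries in equal positions) from the two lists. -/
def stripOnce (I J : List ℕ) : Option (List ℕ × List ℕ) :=
  ((List.range (min I.length J.length)).find? (fun s => I.getD s 0 == J.getD s 0)).map
    (fun s => (I.eraseIdx s, J.eraseIdx s))

def stripAux : ℕ → List ℕ → List ℕ → List ℕ × List ℕ
  | 0, I, J => (I, J)
  | n+1, I, J =>
    match stripOnce I J with
    | none => (I, J)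
    | some (I', J') => stripAux n I' J'

/-- Repeatedly remove the "common part" (equal entries in equal positions). -/
def strip (I J : List ℕ) : List ℕ × List ℕ := stripAux I.length I J

/-- The `s`-th entry (0-indexed) of the list, viewed in `ℕ ∪ {∞}`, with `∞` beyond the end. -/
def entry (l : List ℕ) (s : ℕ) : WithTop ℕ :=
  (l.map (fun a => (a : WithTop ℕ))).getD s ⊤

/-- Non-nesting condition on sorted lists `I`, `J` with `I` the shorter one:
after removing the common part, all consecutive-difference pairs are non-nesting
(with the `∞` convention for the shorter list). -/
def ListsNonNesting (I J : List ℕ) : Prop :=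
  ∀ s : ℕ, s + 1 < (strip I J).2.length →
    PairNonNesting (entry (strip I J).1 s) (entry (strip I J).1 (s+1))
      (entry (strip I J).2 s) (entry (strip I J).2 (s+1))

def ListsNonCrossing (I J : List ℕ) : Prop :=
  ∀ s : ℕ, s + 1 < (strip I J).2.length →
    PairNonCrossing (entry (strip I J).1 s) (entry (strip I J).1 (s+1))
      (entry (strip I J).2 s) (entry (strip I J).2 (s+1))

/-- The increasing list of elements of a finite set. -/
def sortedList (I : Finset ℕ) : List ℕ := I.sort (· ≤ ·)

/-- Subsets `I`, `J` are non-nesting. -/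
def SetsNonNesting (I J : Finset ℕ) : Prop :=
  if I.card ≤ J.card then ListsNonNesting (sortedList I) (sortedList J)
  else ListsNonNesting (sortedList J) (sortedList I)

/-- Subsets `I`, `J` are non-crossing. -/
def SetsNonCrossing (I J : Finset ℕ) : Prop :=
  if I.card ≤ J.card then ListsNonCrossing (sortedList I) (sortedList J)
  else ListsNonCrossing (sortedList J) (sortedList I)

/-- `A ≺ B`: every element of `A` is smaller than every element of `B`. -/
def Precedes (A B : Finset ℕ) : Prop := ∀ a ∈ A, ∀ b ∈ B, a < b

/-- Leclerc–Zelevinsky weak separation. -/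
def WeaklySeparated (I J : Finset ℕ) : Prop :=
  (J.card ≤ I.card ∧ ∃ J₁ J₂ : Finset ℕ, Disjoint J₁ J₂ ∧ J \ I = J₁ ∪ J₂ ∧
    Precedes J₁ (I \ J) ∧ Precedes (I \ J) J₂) ∨
  (I.card ≤ J.card ∧ ∃ I₁ I₂ : Finset ℕ, Disjoint I₁ I₂ ∧ I \ J = I₁ ∪ I₂ ∧
    Precedes I₁ (J \ I) ∧ Precedes (J \ I) I₂)

/-- Number of north steps of the path `p(I)` among its first `k` steps. -/
def northCount (I : Finset ℕ) (k : ℕ) : ℕ := (I.filter (fun i => i ≤ k)).card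

/-- Paths `p(I)`, `p(J)` are non-crossing: one lies weakly northwest of the other
along their entire length. -/
def PathsNonCrossing (I J : Finset ℕ) : Prop :=
  (∀ k, northCount J k ≤ northCount I k) ∨ (∀ k, northCount I k ≤ northCount J k)

/-- `[k₁, k₂]` (in step coordinates) is a proper common part of the paths `p(I)`, `p(J)`
of length `m`: a maximal shared connected subpath containing neither the source nor an
endpoint.  Maximality is expressed by the two paths separating just before `k₁` and just
after `k₂`. -/
def ProperCommonPart (m : ℕ) (I J : Finset ℕ) (k₁ k₂ : ℕ) : Prop :=
  1 ≤ k₁ ∧ k₁ ≤ k₂ ∧ k₂ < m ∧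
  (∀ k, k₁ ≤ k → k ≤ k₂ → northCount I k = northCount J k) ∧
  northCount I (k₁ - 1) ≠ northCount J (k₁ - 1) ∧
  northCount I (k₂ + 1) ≠ northCount J (k₂ + 1)

/-- Paths `p(I)`, `p(J)` are non-kissing: at every proper common part each path leaves
in the same direction in which it entered (the common part is a crossing, not a kiss). -/
def PathsNonKissing (m : ℕ) (I J : Finset ℕ) : Prop :=
  ∀ k₁ k₂, ProperCommonPart m I J k₁ k₂ → ((k₁ ∈ I) ↔ (k₂ + 1 ∈ I))

/-- Number of north steps among the first `k` steps, for `k ∈ ℤ` (zero for `k ≤ 0`). -/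
def northCountZ (I : Finset ℕ) (k : ℤ) : ℤ := (northCount I k.toNat : ℤ)

/-- The indicator Gelfand–Tsetlin pattern of the path `p(I)`: the cell
`[x,x+1] × [y,y+1]` gets a `1` if it lies southeast of the path and `0` if northwest. -/
noncomputable def Tpat (I : Finset ℕ) (x y : ℤ) : ℝ :=
  if y + 1 ≤ northCountZ I (x + y + 1) then 1 else 0

/-- `(x,y)` is a node of the partial staircase `L ⊆ L_m` with set of sink heights `A`:
it lies (weakly) southwest of some sink `(m-j, j)`, `j ∈ A`. -/
def NodeL (m : ℕ) (A : Finset ℕ) (x y : ℤ) : Prop :=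
  0 ≤ x ∧ 0 ≤ y ∧ ∃ j ∈ A, x + j ≤ m ∧ y ≤ j

/-- Same, with natural-number coordinates. -/
def InL (m : ℕ) (A : Finset ℕ) (x y : ℕ) : Prop :=
  ∃ j ∈ A, x + j ≤ m ∧ y ≤ j

/-- The path `p(I)` is contained in the partial staircase with sink heights `A`. -/
def PathInL (m : ℕ) (A : Finset ℕ) (I : Finset ℕ) : Prop :=
  ∀ k ≤ m, InL m A (k - northCount I k) (northCount I k)

/-- A critical node has edges of `L` leaving it toward both the north and the east. -/
def CriticalNode (m : ℕ) (A : Finset ℕ) (x y : ℕ) : Prop :=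
  InL m A (x + 1) y ∧ InL m A x (y + 1)

open Classical in
/-- `N(L)`: the number of critical nodes of the partial staircase. -/
noncomputable def numCritical (m : ℕ) (A : Finset ℕ) : ℕ :=
  ((Finset.range (m+1) ×ˢ Finset.range (m+1)).filter
    (fun p => CriticalNode m A p.1 p.2)).card


/-! ### Auxiliary development -/

section NKHelpers

open List

-- northCount basics

lemma northCount_mono (S : Finset ℕ) {k l : ℕ} (h : k ≤ l) :
    northCount S k ≤ northCount S l := by
  apply Finset.card_le_card
  intro x hx
  rw [Finset.mem_filter] at hx ⊢
  exact ⟨hx.1, le_trans hx.2 h⟩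

lemma northCount_le_card (S : Finset ℕ) (k : ℕ) : northCount S k ≤ S.card :=
  Finset.card_le_card (Finset.filter_subset _ _)

lemma northCount_succ (S : Finset ℕ) (k : ℕ) :
    northCount S (k+1) = northCount S k + (if (k+1) ∈ S then 1 else 0) := by
  classical
  unfold northCount
  by_cases h : (k+1) ∈ S
  · rw [if_pos h]
    have hins : S.filter (fun i => i ≤ k+1) = insert (k+1) (S.filter (fun i => i ≤ k)) := by
      ext x
      simp only [Finset.mem_filter, Finset.mem_insert]
      constructor
      · rintro ⟨hx, hle⟩
        rcases Nat.lt_or_ge x (k+1) with h' | h'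
        · exact Or.inr ⟨hx, by omega⟩
        · left; omega
      · rintro (rfl | ⟨hx, hle⟩)
        · exact ⟨h, le_refl _⟩
        · exact ⟨hx, by omega⟩
    rw [hins, Finset.card_insert_of_notMem (by simp)]
  · rw [if_neg h]
    have : S.filter (fun i => i ≤ k+1) = S.filter (fun i => i ≤ k) := by
      ext x
      simp only [Finset.mem_filter]
      constructor
      · rintro ⟨hx, hle⟩
        refine ⟨hx, ?_⟩
        rcases Nat.eq_or_lt_of_le hle with h' | h'
        · exact absurd (h' ▸ hx) h
        · omega
      · rintro ⟨hx, hle⟩; exact ⟨hx, by omega⟩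
    rw [this]; omega

lemma northCount_pred (S : Finset ℕ) {k : ℕ} (hk : 1 ≤ k) :
    northCount S k = northCount S (k-1) + (if k ∈ S then 1 else 0) := by
  obtain ⟨j, rfl⟩ := Nat.exists_eq_add_of_le' hk
  simpa using northCount_succ S j

lemma northCount_step (S : Finset ℕ) {k : ℕ} (hk : 1 ≤ k) :
    northCount S (k-1) ≤ northCount S k ∧ northCount S k ≤ northCount S (k-1) + 1 := by
  rw [northCount_pred S hk]; split <;> omega

lemma mem_iff_step (S : Finset ℕ) {k : ℕ} (hk : 1 ≤ k) :
    k ∈ S ↔ northCount S k = northCount S (k-1) + 1 := by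
  by_cases h : k ∈ S
  · rw [northCount_pred S hk, if_pos h]; simp [h]
  · rw [northCount_pred S hk, if_neg h]; simp [h]

lemma not_mem_iff_step (S : Finset ℕ) {k : ℕ} (hk : 1 ≤ k) :
    k ∉ S ↔ northCount S k = northCount S (k-1) := by
  by_cases h : k ∈ S
  · rw [northCount_pred S hk, if_pos h]; simp [h]
  · rw [northCount_pred S hk, if_neg h]; simp [h]

-- sorted-list counting

lemma sorted_get_le_iff {L : List ℕ} (hL : L.Pairwise (· < ·)) :
    ∀ (s : ℕ) (h : s < L.length) (k : ℕ),
      (L.get ⟨s, h⟩ ≤ k ↔ s + 1 ≤ L.countP (fun x => decide (x ≤ k))) := by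
  induction L with
  | nil => intro s h k; simp at h
  | cons a L ih =>
    intro s h k
    have hsa : ∀ b ∈ L, a < b := (List.pairwise_cons.mp hL).1
    have hL' : L.Pairwise (· < ·) := (List.pairwise_cons.mp hL).2
    cases s with
    | zero =>
      show a ≤ k ↔ 1 ≤ (a :: L).countP _
      rw [List.countP_cons]
      by_cases hak : a ≤ k
      · simp [hak]
      · have h0 : L.countP (fun x => decide (x ≤ k)) = 0 := by
          rw [List.countP_eq_zero]
          intro b hb
          have := hsa b hb
          simp only [decide_eq_true_eq]
          omega
        simp [hak, h0]
    | succ s =>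
      have h' : s < L.length := by simpa using h
      show L.get ⟨s, h'⟩ ≤ k ↔ s + 2 ≤ (a :: L).countP _
      rw [List.countP_cons, ih hL' s h' k]
      by_cases hak : a ≤ k
      · simp [hak]
      · have h0 : L.countP (fun x => decide (x ≤ k)) = 0 := by
          rw [List.countP_eq_zero]
          intro b hb
          have := hsa b hb
          simp only [decide_eq_true_eq]
          omega
        simp [hak, h0]

lemma northCount_eq_countP (S : Finset ℕ) (k : ℕ) :
    northCount S k = (sortedList S).countP (fun x => decide (x ≤ k)) := by
  classical
  have h1 : (S.filter (fun i => i ≤ k)).card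
      = Multiset.card (Multiset.filter (fun i => i ≤ k) S.val) := by
    show Multiset.card (Finset.filter (fun i => i ≤ k) S).val = _
    rw [Finset.filter_val]
  have h2 : S.val = ↑(sortedList S) := (Finset.sort_eq S _).symm
  rw [northCount, h1, h2]
  simp [List.countP_eq_length_filter]

end NKHelpers


section NKEntry

open List

lemma entry_norm (l : List ℕ) (s : ℕ) :
    entry l s = (l.map (fun a => WithTop.some a)).getD s ⊤ := by
  unfold entry
  congr 1
  induction l with
  | nil => rfl
  | cons a l ih =>
    simp only [List.map_cons]
    rw [← ih]
    rfl

lemma entry_eq_get {L : List ℕ} {s : ℕ} (h : s < L.length) :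
    entry L s = WithTop.some (L.get ⟨s, h⟩) := by
  rw [entry_norm]
  have h' : s < (L.map (fun a => WithTop.some a)).length := by
    rw [List.length_map]; exact h
  rw [List.getD_eq_getElem _ _ h', List.getElem_map]
  rfl

lemma entry_eq_top {L : List ℕ} {s : ℕ} (h : L.length ≤ s) : entry L s = ⊤ := by
  rw [entry_norm]
  apply List.getD_eq_default
  rw [List.length_map]; exact h

lemma length_sortedList (S : Finset ℕ) : (sortedList S).length = S.card :=
  Finset.length_sort _

lemma entry_le_iff (S : Finset ℕ) (s k : ℕ) :
    entry (sortedList S) s ≤ WithTop.some k ↔ s + 1 ≤ northCount S k := by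
  rcases Nat.lt_or_ge s (sortedList S).length with h | h
  · rw [entry_eq_get h, northCount_eq_countP]
    rw [← sorted_get_le_iff (show (sortedList S).Pairwise (· < ·) from (Finset.sortedLT_sort S).pairwise) s h k]
    exact WithTop.coe_le_coe
  · rw [entry_eq_top h]
    constructor
    · intro hh
      exact absurd (top_le_iff.mp hh) (by simp)
    · intro hh
      exfalso
      have h1 := northCount_le_card S k
      have h2 := length_sortedList S
      omega

lemma lt_entry_iff (S : Finset ℕ) (s k : ℕ) :
    WithTop.some k < entry (sortedList S) s ↔ northCount S k ≤ s := by
  rw [← not_le, entry_le_iff]; omega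

lemma wt_sandwich {e : WithTop ℕ} {k : ℕ} (hk : 1 ≤ k)
    (h1 : WithTop.some (k-1) < e) (h2 : e ≤ WithTop.some k) : e = WithTop.some k := by
  cases e with
  | top => exact absurd (top_le_iff.mp h2) (by simp)
  | coe n =>
    have h1' : k - 1 < n := WithTop.coe_lt_coe.mp h1
    have h2' : n ≤ k := WithTop.coe_le_coe.mp h2
    have : n = k := by omega
    rw [this]

lemma wt_lt_coe_iff {e : WithTop ℕ} {k : ℕ} (hk : 1 ≤ k) :
    e < WithTop.some k ↔ e ≤ WithTop.some (k-1) := by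
  cases e with
  | top => simp
  | coe n =>
    rw [WithTop.coe_lt_coe, WithTop.coe_le_coe]
    omega

lemma entry_eq_coe_iff (S : Finset ℕ) (s k : ℕ) (hk : 1 ≤ k) :
    entry (sortedList S) s = WithTop.some k ↔
      northCount S k = s + 1 ∧ northCount S (k-1) = s := by
  constructor
  · intro h
    have h1 : s + 1 ≤ northCount S k := (entry_le_iff S s k).1 (le_of_eq h)
    have h2 : northCount S (k-1) ≤ s := by
      rw [← lt_entry_iff S s (k-1), h]
      exact WithTop.coe_lt_coe.mpr (by omega)
    have h3 := northCount_step S hk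
    constructor <;> omega
  · rintro ⟨h1, h2⟩
    apply wt_sandwich hk
    · rw [lt_entry_iff]; omega
    · rw [entry_le_iff]; omega

lemma entry_spec {S : Finset ℕ} (hS : 0 ∉ S) {s : ℕ} (h : s < S.card) :
    ∃ k : ℕ, 1 ≤ k ∧ k ∈ S ∧ entry (sortedList S) s = WithTop.some k ∧
      northCount S k = s + 1 ∧ northCount S (k-1) = s := by
  have hlen : s < (sortedList S).length := by rw [length_sortedList]; exact h
  set k := (sortedList S).get ⟨s, hlen⟩ with hkdef
  have hmem : k ∈ S := by
    rw [← Finset.mem_sort (· ≤ ·)]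
    exact List.get_mem _ _
  have hk1 : 1 ≤ k := by
    rcases Nat.eq_zero_or_pos k with h0 | h0
    · exact absurd (h0 ▸ hmem) hS
    · exact h0
  have he : entry (sortedList S) s = WithTop.some k := entry_eq_get hlen
  have hc := (entry_eq_coe_iff S s k hk1).1 he
  exact ⟨k, hk1, hmem, he, hc.1, hc.2⟩

lemma entry_of_mem {S : Finset ℕ} {k : ℕ} (hk1 : 1 ≤ k) (hk : k ∈ S) :
    entry (sortedList S) (northCount S (k-1)) = WithTop.some k := by
  rw [entry_eq_coe_iff S _ k hk1]
  have := (mem_iff_step S hk1).1 hk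
  omega

end NKEntry


section NKStrip

open List

/-- The common part: elements of `I ∩ J` at which the two paths agree. -/
def com (I J : Finset ℕ) : Finset ℕ :=
  (I ∩ J).filter (fun k => northCount I k = northCount J k)

lemma mem_com {I J : Finset ℕ} {k : ℕ} :
    k ∈ com I J ↔ k ∈ I ∧ k ∈ J ∧ northCount I k = northCount J k := by
  unfold com
  simp [Finset.mem_filter, Finset.mem_inter, and_assoc]

lemma com_subset_left {I J : Finset ℕ} : com I J ⊆ I :=
  (Finset.filter_subset _ _).trans Finset.inter_subset_left

lemma com_subset_right {I J : Finset ℕ} : com I J ⊆ J :=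
  (Finset.filter_subset _ _).trans Finset.inter_subset_right

lemma sortedList_erase (S : Finset ℕ) (k : ℕ) :
    (sortedList S).erase k = sortedList (S.erase k) := by
  refine List.Perm.eq_of_pairwise'
    ((Finset.pairwise_sort _ (· ≤ ·)).sublist List.erase_sublist)
    (Finset.pairwise_sort _ (· ≤ ·)) ?_
  rw [← Multiset.coe_eq_coe]
  have h1 : ((sortedList S).erase k : Multiset ℕ) = (S.val.erase k) := by
    rw [← Multiset.coe_erase]
    congr 1
    exact Finset.sort_eq S _
  have h2 : ((sortedList (S.erase k) : List ℕ) : Multiset ℕ) = (S.erase k).val :=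
    Finset.sort_eq _ _
  rw [h1, h2, Finset.erase_val]

lemma getD_sorted {S : Finset ℕ} {s : ℕ} (h : s < (sortedList S).length) :
    (sortedList S).getD s 0 = (sortedList S).get ⟨s, h⟩ :=
  List.getD_eq_getElem _ _ h

lemma stripOnce_none_iff {I J : Finset ℕ} (h0I : 0 ∉ I) (h0J : 0 ∉ J) :
    stripOnce (sortedList I) (sortedList J) = none ↔ com I J = ∅ := by
  unfold stripOnce
  rw [Option.map_eq_none_iff, List.find?_eq_none]
  constructor
  · intro h
    rw [Finset.eq_empty_iff_forall_notMem]
    intro k hk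
    rw [mem_com] at hk
    obtain ⟨hkI, hkJ, hkc⟩ := hk
    have hk1 : 1 ≤ k := by
      rcases Nat.eq_zero_or_pos k with h0 | h0
      · exact absurd (h0 ▸ hkI) h0I
      · exact h0
    have hsI := (mem_iff_step I hk1).1 hkI
    have hsJ := (mem_iff_step J hk1).1 hkJ
    set s := northCount I (k-1) with hs
    have hsJ' : northCount J (k-1) = s := by omega
    have heI : entry (sortedList I) s = WithTop.some k := entry_of_mem hk1 hkI
    have heJ : entry (sortedList J) s = WithTop.some k := by
      rw [← hsJ']; exact entry_of_mem hk1 hkJ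
    have hlenI : s < (sortedList I).length := by
      have := northCount_le_card I k
      have := length_sortedList I
      omega
    have hlenJ : s < (sortedList J).length := by
      have := northCount_le_card J k
      have := length_sortedList J
      omega
    have hgI : (sortedList I).getD s 0 = k := by
      rw [getD_sorted hlenI]
      have := entry_eq_get hlenI
      rw [heI] at this
      exact (WithTop.coe_inj.mp this).symm
    have hgJ : (sortedList J).getD s 0 = k := by
      rw [getD_sorted hlenJ]
      have := entry_eq_get hlenJ
      rw [heJ] at this
      exact (WithTop.coe_inj.mp this).symm
    have hmem : s ∈ List.range (min (sortedList I).length (sortedList J).length) := by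
      rw [List.mem_range]
      omega
    have := h s hmem
    rw [hgI, hgJ] at this
    simp at this
  · intro h s hmem
    simp only [beq_iff_eq, Bool.not_eq_true, decide_eq_false_iff_not]
    intro heq
    rw [List.mem_range, lt_min_iff] at hmem
    obtain ⟨hsI, hsJ⟩ := hmem
    set k := (sortedList I).getD s 0 with hk
    have hgI : (sortedList I).get ⟨s, hsI⟩ = k := (getD_sorted hsI).symm
    have hgJ : (sortedList J).get ⟨s, hsJ⟩ = k := by
      rw [heq]; exact (getD_sorted hsJ).symm
    have hkI : k ∈ I := by
      rw [← Finset.mem_sort (· ≤ ·), ← hgI]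
      exact List.get_mem _ _
    have hkJ : k ∈ J := by
      rw [← Finset.mem_sort (· ≤ ·), ← hgJ]
      exact List.get_mem _ _
    have hk1 : 1 ≤ k := by
      rcases Nat.eq_zero_or_pos k with h0 | h0
      · exact absurd (h0 ▸ hkI) h0I
      · exact h0
    have heI : entry (sortedList I) s = WithTop.some k := by
      rw [entry_eq_get hsI, hgI]
    have heJ : entry (sortedList J) s = WithTop.some k := by
      rw [entry_eq_get hsJ, hgJ]
    have hcI := (entry_eq_coe_iff I s k hk1).1 heI
    have hcJ := (entry_eq_coe_iff J s k hk1).1 heJ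
    have : k ∈ com I J := mem_com.2 ⟨hkI, hkJ, by omega⟩
    rw [h] at this
    exact absurd this (Finset.notMem_empty k)

lemma stripOnce_some {I J : Finset ℕ} (h0I : 0 ∉ I) (h0J : 0 ∉ J) {L₁ L₂ : List ℕ}
    (h : stripOnce (sortedList I) (sortedList J) = some (L₁, L₂)) :
    ∃ k ∈ com I J, L₁ = sortedList (I.erase k) ∧ L₂ = sortedList (J.erase k) := by
  unfold stripOnce at h
  rw [Option.map_eq_some_iff] at h
  obtain ⟨s, hfind, heq⟩ := h
  have hmem := List.mem_of_find?_eq_some hfind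
  have hp := List.find?_some hfind
  rw [List.mem_range, lt_min_iff] at hmem
  obtain ⟨hsI, hsJ⟩ := hmem
  rw [beq_iff_eq] at hp
  set k := (sortedList I).getD s 0 with hk
  have hgI : (sortedList I).get ⟨s, hsI⟩ = k := (getD_sorted hsI).symm
  have hgJ : (sortedList J).get ⟨s, hsJ⟩ = k := by
    rw [hp]; exact (getD_sorted hsJ).symm
  have hkI : k ∈ I := by
    rw [← Finset.mem_sort (· ≤ ·), ← hgI]
    exact List.get_mem _ _
  have hkJ : k ∈ J := by
    rw [← Finset.mem_sort (· ≤ ·), ← hgJ]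
    exact List.get_mem _ _
  have hk1 : 1 ≤ k := by
    rcases Nat.eq_zero_or_pos k with h0 | h0
    · exact absurd (h0 ▸ hkI) h0I
    · exact h0
  have heI : entry (sortedList I) s = WithTop.some k := by
    rw [entry_eq_get hsI, hgI]
  have heJ : entry (sortedList J) s = WithTop.some k := by
    rw [entry_eq_get hsJ, hgJ]
  have hcI := (entry_eq_coe_iff I s k hk1).1 heI
  have hcJ := (entry_eq_coe_iff J s k hk1).1 heJ
  have hnI : (sortedList I).Nodup := Finset.sort_nodup _ _
  have hnJ : (sortedList J).Nodup := Finset.sort_nodup _ _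
  rw [Prod.mk.injEq] at heq
  obtain ⟨h1, h2⟩ := heq
  refine ⟨k, mem_com.2 ⟨hkI, hkJ, by omega⟩, ?_, ?_⟩
  · rw [← h1, ← hnI.erase_get ⟨s, hsI⟩, hgI, sortedList_erase]
  · rw [← h2, ← hnJ.erase_get ⟨s, hsJ⟩, hgJ, sortedList_erase]

end NKStrip


section NKStrip2

lemma northCount_erase_add {S : Finset ℕ} {k : ℕ} (hk : k ∈ S) (j : ℕ) :
    northCount (S.erase k) j + (if k ≤ j then 1 else 0) = northCount S j := by
  classical
  unfold northCount
  have hfe : (S.erase k).filter (fun i => i ≤ j) = (S.filter (fun i => i ≤ j)).erase k := by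
    ext x
    simp only [Finset.mem_filter, Finset.mem_erase]
    tauto
  rw [hfe]
  by_cases h : k ≤ j
  · rw [if_pos h]
    have hmem : k ∈ S.filter (fun i => i ≤ j) := Finset.mem_filter.2 ⟨hk, h⟩
    rw [Finset.card_erase_of_mem hmem]
    have : 1 ≤ (S.filter (fun i => i ≤ j)).card := Finset.card_pos.2 ⟨k, hmem⟩
    omega
  · rw [if_neg h]
    have hnm : k ∉ S.filter (fun i => i ≤ j) := fun hc => h (Finset.mem_filter.1 hc).2
    rw [Finset.erase_eq_of_notMem hnm, Nat.add_zero]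

lemma com_erase {I J : Finset ℕ} {k : ℕ} (hk : k ∈ com I J) :
    com (I.erase k) (J.erase k) = (com I J).erase k := by
  rw [mem_com] at hk
  obtain ⟨hkI, hkJ, hkc⟩ := hk
  ext j
  simp only [mem_com, Finset.mem_erase]
  have hI := northCount_erase_add hkI j
  have hJ := northCount_erase_add hkJ j
  constructor
  · rintro ⟨⟨hjk, hjI⟩, ⟨-, hjJ⟩, hc⟩
    refine ⟨hjk, hjI, hjJ, by split at hI <;> split at hJ <;> omega⟩
  · rintro ⟨hjk, hjI, hjJ, hc⟩
    refine ⟨⟨hjk, hjI⟩, ⟨hjk, hjJ⟩, by split at hI <;> split at hJ <;> omega⟩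

lemma sdiff_com_erase {I J : Finset ℕ} {k : ℕ} (hk : k ∈ com I J) (S : Finset ℕ) :
    (S.erase k) \ ((com I J).erase k) = S \ com I J := by
  ext j
  simp only [Finset.mem_sdiff, Finset.mem_erase]
  constructor
  · rintro ⟨⟨hjk, hjS⟩, hc⟩
    exact ⟨hjS, fun hcm => hc ⟨hjk, hcm⟩⟩
  · rintro ⟨hjS, hc⟩
    refine ⟨⟨fun hjk => hc (hjk ▸ hk), hjS⟩, fun hcm => hc hcm.2⟩

lemma stripAux_com : ∀ (n : ℕ) (I J : Finset ℕ), 0 ∉ I → 0 ∉ J → (com I J).card ≤ n →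
    stripAux n (sortedList I) (sortedList J) =
      (sortedList (I \ com I J), sortedList (J \ com I J))
  | 0, I, J, h0I, h0J, hn => by
    have hc : com I J = ∅ := Finset.card_eq_zero.mp (Nat.le_zero.mp hn)
    rw [stripAux, hc, Finset.sdiff_empty, Finset.sdiff_empty]
  | n+1, I, J, h0I, h0J, hn => by
    cases h : stripOnce (sortedList I) (sortedList J) with
    | none =>
      have hred : stripAux (n+1) (sortedList I) (sortedList J)
          = (sortedList I, sortedList J) := by rw [stripAux, h]
      have hc : com I J = ∅ := (stripOnce_none_iff h0I h0J).mp h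
      rw [hred, hc, Finset.sdiff_empty, Finset.sdiff_empty]
    | some p =>
      obtain ⟨L₁, L₂⟩ := p
      have hred : stripAux (n+1) (sortedList I) (sortedList J)
          = stripAux n L₁ L₂ := by rw [stripAux, h]
      obtain ⟨k, hk, hL₁, hL₂⟩ := stripOnce_some h0I h0J h
      have hkI : k ∈ I := com_subset_left hk
      have hkJ : k ∈ J := com_subset_right hk
      have hcard : (com (I.erase k) (J.erase k)).card ≤ n := by
        rw [com_erase hk, Finset.card_erase_of_mem hk]
        have : 1 ≤ (com I J).card := Finset.card_pos.2 ⟨k, hk⟩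
        omega
      rw [hred, hL₁, hL₂,
        stripAux_com n (I.erase k) (J.erase k)
          (fun hc => h0I (Finset.mem_of_mem_erase hc))
          (fun hc => h0J (Finset.mem_of_mem_erase hc)) hcard,
        com_erase hk, sdiff_com_erase hk, sdiff_com_erase hk]

lemma strip_sorted {I J : Finset ℕ} (h0I : 0 ∉ I) (h0J : 0 ∉ J) :
    strip (sortedList I) (sortedList J) =
      (sortedList (I \ com I J), sortedList (J \ com I J)) := by
  unfold strip
  apply stripAux_com _ _ _ h0I h0J
  calc (com I J).card ≤ I.card := Finset.card_le_card com_subset_left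
  _ = (sortedList I).length := (length_sortedList I).symm

lemma northCount_sdiff_add {C S : Finset ℕ} (hC : C ⊆ S) (k : ℕ) :
    northCount (S \ C) k + northCount C k = northCount S k := by
  classical
  unfold northCount
  have h1 : (S \ C).filter (fun i => i ≤ k) = (S.filter (fun i => i ≤ k)) \ (C.filter (fun i => i ≤ k)) := by
    ext x
    simp only [Finset.mem_filter, Finset.mem_sdiff]
    tauto
  have h2 : C.filter (fun i => i ≤ k) ⊆ S.filter (fun i => i ≤ k) := by
    intro x hx
    rw [Finset.mem_filter] at hx ⊢
    exact ⟨hC hx.1, hx.2⟩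
  rw [h1, Finset.card_sdiff_of_subset h2]
  have := Finset.card_le_card h2
  omega

lemma Dnat (I J : Finset ℕ) (k : ℕ) :
    northCount I k + northCount (J \ com I J) k
      = northCount J k + northCount (I \ com I J) k := by
  have hA := northCount_sdiff_add (com_subset_left (I := I) (J := J)) k
  have hB := northCount_sdiff_add (com_subset_right (I := I) (J := J)) k
  omega

lemma not_mem_strip {I J : Finset ℕ} {k : ℕ} (hk : 1 ≤ k)
    (h1 : northCount I (k-1) = northCount J (k-1)) (h2 : northCount I k = northCount J k) :
    k ∉ I \ com I J ∧ k ∉ J \ com I J := by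
  have hd1 := Dnat I J (k-1)
  have hd2 := Dnat I J k
  have hcom : k ∈ I → k ∈ J → k ∈ com I J := fun hI hJ => mem_com.2 ⟨hI, hJ, h2⟩
  constructor
  · intro hkI'
    have hkI : k ∈ I := (Finset.mem_sdiff.1 hkI').1
    have hkncom : k ∉ com I J := (Finset.mem_sdiff.1 hkI').2
    have hkJ : k ∉ J := fun hkJ => hkncom (hcom hkI hkJ)
    have hkJ' : k ∉ J \ com I J := fun hc => hkJ (Finset.mem_sdiff.1 hc).1
    have e1 := (mem_iff_step _ hk).1 hkI'
    have e2 := (not_mem_iff_step _ hk).1 hkJ'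
    omega
  · intro hkJ'
    have hkJ : k ∈ J := (Finset.mem_sdiff.1 hkJ').1
    have hkncom : k ∉ com I J := (Finset.mem_sdiff.1 hkJ').2
    have hkI : k ∉ I := fun hkI => hkncom (hcom hkI hkJ)
    have hkI' : k ∉ I \ com I J := fun hc => hkI (Finset.mem_sdiff.1 hc).1
    have e1 := (mem_iff_step _ hk).1 hkJ'
    have e2 := (not_mem_iff_step _ hk).1 hkI'
    omega

lemma flat_of_zero {I J : Finset ℕ} {k₁ k₂ : ℕ} (hk1 : 1 ≤ k₁)
    (hzero : ∀ k, k₁ ≤ k → k ≤ k₂ → northCount I k = northCount J k) :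
    ∀ k, k₁ ≤ k → k ≤ k₂ →
      northCount (I \ com I J) k = northCount (I \ com I J) k₁ ∧
      northCount (J \ com I J) k = northCount (J \ com I J) k₁ := by
  intro k
  induction k with
  | zero => intro h1 _; omega
  | succ k ih =>
    intro h1 h2
    rcases Nat.eq_or_lt_of_le h1 with heq | hlt
    · rw [← heq]
      exact ⟨rfl, rfl⟩
    · have hk : k₁ ≤ k := by omega
      have hkk : k ≤ k₂ := by omega
      obtain ⟨ihI, ihJ⟩ := ih hk hkk
      have hnm := not_mem_strip (I := I) (J := J) (k := k+1) (by omega)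
        (by simpa using hzero k hk hkk) (hzero (k+1) (by omega) h2)
      have e1 := (not_mem_iff_step (I \ com I J) (by omega : 1 ≤ k+1)).1 hnm.1
      have e2 := (not_mem_iff_step (J \ com I J) (by omega : 1 ≤ k+1)).1 hnm.2
      simp only [Nat.add_sub_cancel] at e1 e2
      omega

end NKStrip2


section NKKiss

/-- Arithmetic reformulation of non-kissing: at every proper common part the path `I`
enters from below iff it leaves upward. -/
def KissD (m : ℕ) (I J : Finset ℕ) : Prop :=
  ∀ k₁ k₂, ProperCommonPart m I J k₁ k₂ →
    (northCount J (k₁-1) = northCount I (k₁-1) + 1 ↔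
     northCount I (k₂+1) = northCount J (k₂+1) + 1)

lemma pathsNonKissing_iff_KissD (m : ℕ) (I J : Finset ℕ) :
    PathsNonKissing m I J ↔ KissD m I J := by
  unfold PathsNonKissing KissD
  apply forall_congr'
  intro k₁
  apply forall_congr'
  intro k₂
  refine imp_congr_right ?_
  intro hp
  obtain ⟨ha, hb, hc, hd, he, hf⟩ := hp
  have h1 := hd k₁ le_rfl hb
  have h2 := hd k₂ hb le_rfl
  have p1 := northCount_pred I ha
  have p2 := northCount_pred J ha
  have p3 := northCount_succ I k₂
  have p4 := northCount_succ J k₂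
  have mI1 : (k₁ ∈ I) ↔ (northCount J (k₁-1) = northCount I (k₁-1) + 1) := by
    by_cases m1 : k₁ ∈ I <;> by_cases m2 : k₁ ∈ J
    all_goals try rw [if_neg m1] at p1
    all_goals try rw [if_neg m2] at p2
    all_goals try rw [if_pos m1] at p1
    all_goals try rw [if_pos m2] at p2
    all_goals simp only [m1, iff_true, true_iff, iff_false, false_iff]
    all_goals omega
  have mI2 : (k₂+1 ∈ I) ↔ (northCount I (k₂+1) = northCount J (k₂+1) + 1) := by
    by_cases m3 : k₂+1 ∈ I <;> by_cases m4 : k₂+1 ∈ J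
    all_goals try rw [if_neg m3] at p3
    all_goals try rw [if_neg m4] at p4
    all_goals try rw [if_pos m3] at p3
    all_goals try rw [if_pos m4] at p4
    all_goals simp only [m3, iff_true, true_iff, iff_false, false_iff]
    all_goals omega
  rw [mI1, mI2]

lemma properCommonPart_symm {m : ℕ} {I J : Finset ℕ} {k₁ k₂ : ℕ}
    (hp : ProperCommonPart m I J k₁ k₂) : ProperCommonPart m J I k₁ k₂ := by
  obtain ⟨ha, hb, hc, hd, he, hf⟩ := hp
  exact ⟨ha, hb, hc, fun k h1 h2 => (hd k h1 h2).symm, Ne.symm he, Ne.symm hf⟩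

lemma KissD_symm {m : ℕ} {I J : Finset ℕ} (h : KissD m I J) : KissD m J I := by
  intro k₁ k₂ hp
  have hp' := properCommonPart_symm hp
  have hiff := h k₁ k₂ hp'
  obtain ⟨ha, hb, hc, hd, he, hf⟩ := hp
  have h1 := hd k₁ le_rfl hb
  have h2 := hd k₂ hb le_rfl
  have s1 := northCount_step I ha
  have s2 := northCount_step J ha
  have s3 := northCount_step I (show 1 ≤ k₂+1 by omega)
  have s4 := northCount_step J (show 1 ≤ k₂+1 by omega)
  simp only [Nat.add_sub_cancel] at s3 s4
  omega

end NKKiss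


section NKMain

lemma zero_not_mem_of_subset {m : ℕ} {S : Finset ℕ} (hS : S ⊆ Finset.Icc 1 m) : 0 ∉ S := by
  intro h
  have := hS h
  rw [Finset.mem_Icc] at this
  omega

lemma main_iff {m : ℕ} {I J : Finset ℕ} (hI : I ⊆ Finset.Icc 1 m) (hJ : J ⊆ Finset.Icc 1 m)
    (hc : I.card ≤ J.card) :
    ListsNonCrossing (sortedList I) (sortedList J) ↔ KissD m I J := by
  have h0I : 0 ∉ I := zero_not_mem_of_subset hI
  have h0J : 0 ∉ J := zero_not_mem_of_subset hJ
  have hs := strip_sorted h0I h0J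
  set C := com I J with hC
  set I' := I \ C with hI'def
  set J' := J \ C with hJ'def
  have h0I' : 0 ∉ I' := fun h => h0I (Finset.mem_sdiff.1 h).1
  have h0J' : 0 ∉ J' := fun h => h0J (Finset.mem_sdiff.1 h).1
  have hIm : ∀ k ∈ I', k ≤ m := fun k h => (Finset.mem_Icc.1 (hI (Finset.mem_sdiff.1 h).1)).2
  have hJm : ∀ k ∈ J', k ≤ m := fun k h => (Finset.mem_Icc.1 (hJ (Finset.mem_sdiff.1 h).1)).2
  have hd : ∀ k, northCount I k + northCount J' k = northCount J k + northCount I' k :=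
    fun k => Dnat I J k
  have hcc : I'.card ≤ J'.card := by
    have h1 : C ⊆ I := com_subset_left
    have h2 : C ⊆ J := com_subset_right
    rw [hI'def, hJ'def, Finset.card_sdiff_of_subset h1, Finset.card_sdiff_of_subset h2]
    have := Finset.card_le_card h1
    omega
  constructor
  · -- non-crossing lists → non-kissing
    intro h k₁ k₂ hp
    obtain ⟨ha, hb, hcm, hz, hfl, hfr⟩ := hp
    have hflat := flat_of_zero ha hz
    have hIJ1 : northCount I k₁ = northCount J k₁ := hz k₁ le_rfl hb
    set t := northCount I' k₁ with ht
    have htJ : northCount J' k₁ = t := by have := hd k₁; omega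
    have hcI2 : northCount I' k₂ = t := (hflat k₂ hb le_rfl).1
    have hcJ2 : northCount J' k₂ = t := by rw [(hflat k₂ hb le_rfl).2, htJ]
    have sI1 := northCount_step I' ha
    have sJ1 := northCount_step J' ha
    have sI2 := northCount_step I' (show 1 ≤ k₂ + 1 by omega)
    have sJ2 := northCount_step J' (show 1 ≤ k₂ + 1 by omega)
    simp only [Nat.add_sub_cancel] at sI2 sJ2
    have hfl' : northCount I' (k₁-1) ≠ northCount J' (k₁-1) := by
      have := hd (k₁-1); omega
    have hfr' : northCount I' (k₂+1) ≠ northCount J' (k₂+1) := by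
      have := hd (k₂+1); omega
    have hdk1 := hd (k₁ - 1)
    have hdk2 := hd (k₂ + 1)
    have hcase1 : (northCount I' (k₁-1) + 1 = t ∧ northCount J' (k₁-1) = t) ∨
        (northCount I' (k₁-1) = t ∧ northCount J' (k₁-1) + 1 = t) := by omega
    have hcase2 : (northCount I' (k₂+1) = t + 1 ∧ northCount J' (k₂+1) = t) ∨
        (northCount I' (k₂+1) = t ∧ northCount J' (k₂+1) = t + 1) := by omega
    rcases hcase1 with ⟨ha1, ha2⟩ | ⟨ha1, ha2⟩ <;>
      rcases hcase2 with ⟨hb1, hb2⟩ | ⟨hb1, hb2⟩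
    · -- LHS true, RHS true
      constructor <;> intro hx <;> omega
    · -- LHS true, RHS false : crossing of the first kind
      exfalso
      have ht1 : 1 ≤ t := by omega
      have e1 : entry (sortedList I') (t-1) = WithTop.some k₁ := by
        rw [entry_eq_coe_iff I' (t-1) k₁ ha]; omega
      have e2 : entry (sortedList J') (t-1) ≤ WithTop.some (k₁-1) := by
        rw [entry_le_iff]; omega
      have e3 : entry (sortedList J') t = WithTop.some (k₂+1) := by
        rw [entry_eq_coe_iff J' t (k₂+1) (by omega)]
        simp only [Nat.add_sub_cancel]
        omega
      have e4 : WithTop.some (k₂+1) < entry (sortedList I') t := by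
        rw [lt_entry_iff]; omega
      have hbound : (t-1) + 1 < (strip (sortedList I) (sortedList J)).2.length := by
        rw [hs]
        show t - 1 + 1 < (sortedList J').length
        rw [length_sortedList]
        have := northCount_le_card J' (k₂+1)
        omega
      have hpc := h (t-1) hbound
      rw [hs] at hpc
      have htt : t - 1 + 1 = t := by omega
      rw [htt] at hpc
      refine hpc.1 ⟨lt_of_le_of_lt e2 (e1 ▸ WithTop.coe_lt_coe.2 (by omega)), ?_, ?_⟩
      · rw [e1, e3]; exact WithTop.coe_lt_coe.2 (by omega)
      · rw [e3]; exact e4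
    · -- LHS false, RHS true : crossing of the second kind
      exfalso
      have ht1 : 1 ≤ t := by omega
      have e1 : entry (sortedList J') (t-1) = WithTop.some k₁ := by
        rw [entry_eq_coe_iff J' (t-1) k₁ ha]; omega
      have e2 : entry (sortedList I') (t-1) ≤ WithTop.some (k₁-1) := by
        rw [entry_le_iff]; omega
      have e3 : entry (sortedList I') t = WithTop.some (k₂+1) := by
        rw [entry_eq_coe_iff I' t (k₂+1) (by omega)]
        simp only [Nat.add_sub_cancel]
        omega
      have e4 : WithTop.some (k₂+1) < entry (sortedList J') t := by
        rw [lt_entry_iff]; omega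
      have hbound : (t-1) + 1 < (strip (sortedList I) (sortedList J)).2.length := by
        rw [hs]
        show t - 1 + 1 < (sortedList J').length
        rw [length_sortedList]
        have := northCount_le_card I' (k₂+1)
        omega
      have hpc := h (t-1) hbound
      rw [hs] at hpc
      have htt : t - 1 + 1 = t := by omega
      rw [htt] at hpc
      refine hpc.2 ⟨lt_of_le_of_lt e2 (e1 ▸ WithTop.coe_lt_coe.2 (by omega)), ?_, ?_⟩
      · rw [e1, e3]; exact WithTop.coe_lt_coe.2 (by omega)
      · rw [e3]; exact e4
    · -- LHS false, RHS false
      constructor <;> intro hx <;> omega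
  · -- non-kissing → non-crossing lists
    intro h
    unfold ListsNonCrossing
    rw [hs]
    intro s hlen
    show PairNonCrossing (entry (sortedList I') s) (entry (sortedList I') (s+1))
      (entry (sortedList J') s) (entry (sortedList J') (s+1))
    rw [length_sortedList] at hlen
    obtain ⟨x, hx1, hxJ, hxe, hx2, hx3⟩ := entry_spec h0J' (show s < J'.card by omega)
    obtain ⟨y₂, hy₂1, hy₂J, hy₂e, hy₂2, hy₂3⟩ := entry_spec h0J' hlen
    constructor
    · -- pattern x < u < y < v
      rintro ⟨hh1, hh2, hh3⟩
      have huf : s < I'.card := by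
        by_contra hcon
        rw [entry_eq_top (by rw [length_sortedList]; omega), hy₂e] at hh2
        exact absurd hh2 (by simp)
      obtain ⟨p, hp1, hpI, hpe, hp2, hp3⟩ := entry_spec h0I' huf
      have hJp : s + 1 ≤ northCount J' (p-1) := by
        rw [← entry_le_iff]
        rw [hpe, wt_lt_coe_iff hp1] at hh1
        exact hh1
      have hpy : p < y₂ := by
        rw [hpe, hy₂e] at hh2
        exact WithTop.coe_lt_coe.1 hh2
      have hIy : northCount I' y₂ ≤ s + 1 := by
        rw [← lt_entry_iff]
        rw [hy₂e] at hh3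
        exact hh3
      have hpm : p ≤ m := hIm p hpI
      have hym : y₂ ≤ m := hJm y₂ hy₂J
      have hJp2 : northCount J' (p-1) ≤ s + 1 :=
        le_trans (northCount_mono J' (by omega : p-1 ≤ y₂-1)) (le_of_eq hy₂3)
      have hzero : ∀ k, p ≤ k → k ≤ y₂-1 → northCount I k = northCount J k := by
        intro k hk1 hk2
        have hJk1 : s + 1 ≤ northCount J' k :=
          le_trans hJp (northCount_mono J' (by omega))
        have hJk2 : northCount J' k ≤ s + 1 :=
          le_trans (northCount_mono J' (by omega : k ≤ y₂-1)) (le_of_eq hy₂3)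
        have hIk1 : s + 1 ≤ northCount I' k := hp2 ▸ northCount_mono I' hk1
        have hIk2 : northCount I' k ≤ s + 1 :=
          le_trans (northCount_mono I' (by omega : k ≤ y₂)) hIy
        have := hd k
        omega
      have hPCP : ProperCommonPart m I J p (y₂-1) := by
        refine ⟨hp1, by omega, by omega, hzero, ?_, ?_⟩
        · have := hd (p-1); omega
        · have hyy : y₂ - 1 + 1 = y₂ := by omega
          rw [hyy]
          have := hd y₂
          omega
      have hkiss := h p (y₂-1) hPCP
      have hyy : y₂ - 1 + 1 = y₂ := by omega
      rw [hyy] at hkiss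
      have hd1 := hd (p-1)
      have hd2 := hd y₂
      have hIy2 : s + 1 ≤ northCount I' y₂ := hp2 ▸ northCount_mono I' (by omega : p ≤ y₂)
      omega
    · -- pattern u < x < v < y
      rintro ⟨hh1, hh2, hh3⟩
      have hvf : s + 1 < I'.card := by
        by_contra hcon
        rw [entry_eq_top (by rw [length_sortedList]; omega), hy₂e] at hh3
        exact absurd hh3 (by simp)
      obtain ⟨y, hy1, hyI, hye, hy2, hy3⟩ := entry_spec h0I' hvf
      have hIx : s + 1 ≤ northCount I' (x-1) := by
        rw [← entry_le_iff]
        rw [hxe, wt_lt_coe_iff hx1] at hh1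
        exact hh1
      have hxy : x < y := by
        rw [hxe, hye] at hh2
        exact WithTop.coe_lt_coe.1 hh2
      have hJy : northCount J' y ≤ s + 1 := by
        rw [← lt_entry_iff]
        rw [hye] at hh3
        exact hh3
      have hxm : x ≤ m := hJm x hxJ
      have hym : y ≤ m := hIm y hyI
      have hIx2 : northCount I' (x-1) ≤ s + 1 :=
        le_trans (northCount_mono I' (by omega : x-1 ≤ y-1)) (le_of_eq hy3)
      have hzero : ∀ k, x ≤ k → k ≤ y-1 → northCount I k = northCount J k := by
        intro k hk1 hk2
        have hIk1 : s + 1 ≤ northCount I' k :=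
          le_trans hIx (northCount_mono I' (by omega))
        have hIk2 : northCount I' k ≤ s + 1 :=
          le_trans (northCount_mono I' (by omega : k ≤ y-1)) (le_of_eq hy3)
        have hJk1 : s + 1 ≤ northCount J' k := hx2 ▸ northCount_mono J' hk1
        have hJk2 : northCount J' k ≤ s + 1 :=
          le_trans (northCount_mono J' (by omega : k ≤ y)) hJy
        have := hd k
        omega
      have hPCP : ProperCommonPart m I J x (y-1) := by
        refine ⟨hx1, by omega, by omega, hzero, ?_, ?_⟩
        · have := hd (x-1); omega
        · have hyy : y - 1 + 1 = y := by omega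
          rw [hyy]
          have := hd y
          omega
      have hkiss := h x (y-1) hPCP
      have hyy : y - 1 + 1 = y := by omega
      rw [hyy] at hkiss
      have hd1 := hd (x-1)
      have hd2 := hd y
      have hJy2 : s + 1 ≤ northCount J' y := hx2 ▸ northCount_mono J' (by omega : x ≤ y)
      omega

end NKMain

/-- Subsets `I`, `J` of `[m]` are non-crossing if and only if the associated lattice
paths `p(I)`, `p(J)` are non-kissing: at every proper common part the two paths leave
in the same relative direction in which they entered. -/
theorem nonCrossing_iff_paths_nonKissing (m : ℕ) (I J : Finset ℕ)
    (hI : I ⊆ Finset.Icc 1 m) (hJ : J ⊆ Finset.Icc 1 m) :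
    SetsNonCrossing I J ↔ PathsNonKissing m I J := by
  unfold SetsNonCrossing
  by_cases hc : I.card ≤ J.card
  · rw [if_pos hc, main_iff hI hJ hc, pathsNonKissing_iff_KissD]
  · rw [if_neg hc, main_iff hJ hI (le_of_lt (Nat.lt_of_not_le hc)),
      pathsNonKissing_iff_KissD]
    exact ⟨fun h => KissD_symm h, fun h => KissD_symm h⟩
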